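/- As α → ∞, sup_{x ∈ [0,∞)} |H(α,x)| = (C(α)/(1+2α))·(1 + o(1)); that is, lim_{α→∞} ( sup_{x ∈ [0,∞)} |H(α,x)| ) · (1+2α) / C(α) = 1, where C(α) = ∫₀^∞ t^α / sinh t dt and H(α,x) = ∫₀^∞ (t^α / sinh t) · (x · sin x)/(x² + t²) dt. -/

import Mathlib

open MeasureTheory Filter Real Set

/-- `C(α) = ∫₀^∞ t^α / sinh t dt`. -/
noncomputable def Cconst (α : ℝ) : ℝ :=
  ∫ t in Set.Ioi (0:ℝ), t ^ α / Real.sinh t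

/-- `H(α,x) = ∫₀^∞ (t^α / sinh t) · (x·sin x)/(x²+t²) dt`. -/
noncomputable def Hfun (α x : ℝ) : ℝ :=
  ∫ t in Set.Ioi (0:ℝ), t ^ α / Real.sinh t * (x * Real.sin x / (x ^ 2 + t ^ 2))


lemma intOn_rpow_exp {a : ℝ} (ha : 0 < a) :
    IntegrableOn (fun t : ℝ => t ^ a * Real.exp (-t)) (Ioi (0:ℝ)) := by
  have h := Real.GammaIntegral_convergent (by linarith : (0:ℝ) < a + 1)
  simpa [mul_comm, add_sub_cancel_right] using h

lemma meas_rpow_exp3 (a : ℝ) :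
    AEStronglyMeasurable (fun t : ℝ => t ^ a * Real.exp (-(3*t)))
      (volume.restrict (Ioi (0:ℝ))) := by
  apply Measurable.aestronglyMeasurable
  fun_prop

lemma intOn_rpow_exp3 {a : ℝ} (ha : 0 < a) :
    IntegrableOn (fun t : ℝ => t ^ a * Real.exp (-(3*t))) (Ioi (0:ℝ)) := by
  refine (intOn_rpow_exp ha).mono' (meas_rpow_exp3 a) ?_
  filter_upwards [ae_restrict_mem measurableSet_Ioi] with t ht
  have h1 : (0:ℝ) < t := ht
  have h2 : Real.exp (-(3*t)) ≤ Real.exp (-t) := by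
    apply Real.exp_le_exp.2; linarith
  have h3 : (0:ℝ) ≤ t ^ a := Real.rpow_nonneg h1.le a
  rw [Real.norm_eq_abs, abs_of_nonneg (by positivity)]
  exact mul_le_mul_of_nonneg_left h2 h3

lemma sinh_bound {a t : ℝ} (ha : 1 ≤ a) (ht : 0 < t) :
    t ^ a / Real.sinh t ≤ 3 * (t ^ (a-1) * Real.exp (-t) + t ^ a * Real.exp (-t)) := by
  have hsinh : 0 < Real.sinh t := Real.sinh_pos_iff.2 ht
  have hta : (0:ℝ) ≤ t ^ a := Real.rpow_nonneg ht.le a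
  have hta1 : (0:ℝ) ≤ t ^ (a-1) := Real.rpow_nonneg ht.le (a-1)
  have hrw : t ^ a = t ^ (a-1) * t := by
    rw [← Real.rpow_add_one ht.ne' (a-1)]; ring_nf
  have he3 : Real.exp 1 < 3 := by
    have := Real.exp_one_lt_d9; linarith
  rcases le_total t 1 with h1 | h1
  · -- t ≤ 1 : sinh t ≥ t, and exp(-t) ≥ exp(-1) ≥ 1/3
    have hst : t ≤ Real.sinh t := (Real.self_lt_sinh_iff.2 ht).le
    have step1 : t ^ a / Real.sinh t ≤ t ^ (a-1) := by
      rw [div_le_iff₀ hsinh, hrw]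
      exact mul_le_mul_of_nonneg_left hst hta1
    have hexp : (1:ℝ) ≤ 3 * Real.exp (-t) := by
      have : Real.exp (-1) ≤ Real.exp (-t) := Real.exp_le_exp.2 (by linarith)
      have h9 : (1:ℝ) ≤ 3 * Real.exp (-1) := by
        rw [Real.exp_neg, ← div_eq_mul_inv]
        exact (one_le_div (Real.exp_pos 1)).2 he3.le
      nlinarith
    calc t ^ a / Real.sinh t ≤ t ^ (a-1) := step1
      _ ≤ 3 * (t ^ (a-1) * Real.exp (-t)) := by nlinarith
      _ ≤ _ := by nlinarith [mul_nonneg hta (Real.exp_pos (-t)).le]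
  · -- 1 ≤ t : sinh t ≥ exp t (1 - exp(-2))/2 ≥ exp t / 3
    have hsinh_ge : Real.exp t / 3 ≤ Real.sinh t := by
      rw [Real.sinh_eq]
      have h2 : Real.exp (-t) ≤ Real.exp t * Real.exp (-2) := by
        rw [← Real.exp_add]
        apply Real.exp_le_exp.2; linarith
      have he2 : Real.exp (-2) ≤ 1/3 := by
        have h32 : (3:ℝ) ≤ Real.exp 2 := by
          have h2e : (2:ℝ) ≤ Real.exp 1 := by linarith [Real.add_one_le_exp (1:ℝ)]
          have hee : Real.exp 2 = Real.exp 1 * Real.exp 1 := by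
            rw [← Real.exp_add]; norm_num
          nlinarith []
        rw [Real.exp_neg]
        calc (Real.exp 2)⁻¹ ≤ (3:ℝ)⁻¹ := by
              apply inv_anti₀ (by norm_num) h32
          _ = 1/3 := by norm_num
      nlinarith [Real.exp_pos t]
    have step : t ^ a / Real.sinh t ≤ 3 * (t ^ a * Real.exp (-t)) := by
      rw [div_le_iff₀ hsinh]
      have h0 : Real.exp (-t) * Real.exp t = 1 := by
        rw [← Real.exp_add]; simp
      have key : t ^ a * Real.exp (-t) * (Real.exp t / 3) = t ^ a / 3 := by
        rw [Real.exp_neg]; field_simp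
      nlinarith [mul_le_mul_of_nonneg_left hsinh_ge (mul_nonneg hta (Real.exp_pos (-t)).le)]
    nlinarith [mul_nonneg hta1 (Real.exp_pos (-t)).le]

lemma meas_sinh (a : ℝ) :
    AEStronglyMeasurable (fun t : ℝ => t ^ a / Real.sinh t)
      (volume.restrict (Ioi (0:ℝ))) := by
  apply Measurable.aestronglyMeasurable
  fun_prop

lemma intOn_sinh {a : ℝ} (ha : 1 < a) :
    IntegrableOn (fun t : ℝ => t ^ a / Real.sinh t) (Ioi (0:ℝ)) := by
  have hint : IntegrableOn
      (fun t : ℝ => 3 * (t ^ (a-1) * Real.exp (-t) + t ^ a * Real.exp (-t))) (Ioi (0:ℝ)) :=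
    (((intOn_rpow_exp (by linarith : (0:ℝ) < a - 1)).add
      (intOn_rpow_exp (by linarith : (0:ℝ) < a))).const_mul 3)
  refine hint.mono' (meas_sinh a) ?_
  filter_upwards [ae_restrict_mem measurableSet_Ioi] with t ht
  have h1 : (0:ℝ) < t := ht
  have hsinh : 0 < Real.sinh t := Real.sinh_pos_iff.2 h1
  rw [Real.norm_eq_abs, abs_of_nonneg (by positivity)]
  exact sinh_bound ha.le h1


lemma integral_rpow_exp {a : ℝ} (ha : 0 < a) :
    ∫ t in Ioi (0:ℝ), t ^ a * Real.exp (-t) = Real.Gamma (a+1) := by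
  rw [Real.Gamma_eq_integral (by linarith : (0:ℝ) < a + 1)]
  refine setIntegral_congr_fun measurableSet_Ioi fun t ht => ?_
  rw [add_sub_cancel_right, mul_comm]

lemma integral_rpow_exp3 {a : ℝ} (ha : 0 < a) :
    ∫ t in Ioi (0:ℝ), t ^ a * Real.exp (-(3*t)) = (1/3) ^ (a+1) * Real.Gamma (a+1) := by
  have h := Real.integral_rpow_mul_exp_neg_mul_Ioi
    (by linarith : (0:ℝ) < a + 1) (by norm_num : (0:ℝ) < 3)
  rw [add_sub_cancel_right] at h
  exact h

lemma integral_moment {a : ℝ} (ha : 0 < a) :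
    ∫ t in Ioi (0:ℝ), (t - (a+1))^2 * (t ^ a * Real.exp (-t))
      = (a+1) * Real.Gamma (a+1) := by
  have h0 : ∀ t ∈ Ioi (0:ℝ), (t - (a+1))^2 * (t ^ a * Real.exp (-t))
      = t ^ (a+2) * Real.exp (-t) - (2*(a+1)) * (t ^ (a+1) * Real.exp (-t))
        + (a+1)^2 * (t ^ a * Real.exp (-t)) := by
    intro t ht
    have ht' : (0:ℝ) < t := ht
    have e1 : t ^ (a+1) = t ^ a * t := Real.rpow_add_one ht'.ne' a
    have e2 : t ^ (a+2) = t ^ a * t^2 := by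
      rw [show a+2 = a+1+1 by ring, Real.rpow_add_one ht'.ne', e1]; ring
    rw [e1, e2]; ring
  rw [setIntegral_congr_fun measurableSet_Ioi h0]
  have i2 : IntegrableOn (fun t : ℝ => t ^ (a+2) * Real.exp (-t)) (Ioi 0) :=
    intOn_rpow_exp (by linarith)
  have i1 : IntegrableOn (fun t : ℝ => (2*(a+1)) * (t ^ (a+1) * Real.exp (-t))) (Ioi 0) :=
    (intOn_rpow_exp (by linarith)).const_mul _
  have i0 : IntegrableOn (fun t : ℝ => (a+1)^2 * (t ^ a * Real.exp (-t))) (Ioi 0) :=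
    (intOn_rpow_exp ha).const_mul _
  have i21 : IntegrableOn (fun t : ℝ => t ^ (a+2) * Real.exp (-t)
      - (2*(a+1)) * (t ^ (a+1) * Real.exp (-t))) (Ioi 0) := i2.sub i1
  rw [integral_add i21 i0, integral_sub i2 i1, integral_const_mul _,
    integral_const_mul _, integral_rpow_exp (by linarith : (0:ℝ) < a + 2),
    integral_rpow_exp (by linarith : (0:ℝ) < a + 1), integral_rpow_exp ha]
  have g2 : Real.Gamma (a+1+1) = (a+1)*Real.Gamma (a+1) :=
    Real.Gamma_add_one (by linarith)
  have g3 : Real.Gamma (a+2+1) = (a+2)*((a+1)*Real.Gamma (a+1)) := by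
    rw [Real.Gamma_add_one (show a+2 ≠ 0 by linarith), show a+2 = a+1+1 by ring,
      Real.Gamma_add_one (show a+1 ≠ 0 by linarith)]
  rw [g3, g2]
  ring

lemma window_integral_ge {a r : ℝ} (ha : 0 < a) (hr : 0 < r) (h0 : 0 < a + 1 - r) :
    Real.Gamma (a+1) - (a+1) * Real.Gamma (a+1) / r^2
      ≤ ∫ t in Icc (a+1-r) (a+1+r), t ^ a * Real.exp (-t) := by
  have hWsub : Icc (a+1-r) (a+1+r) ⊆ Ioi (0:ℝ) := fun t htW => lt_of_lt_of_le h0 htW.1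
  have hgint : IntegrableOn (fun t : ℝ => t ^ a * Real.exp (-t)) (Ioi 0) := intOn_rpow_exp ha
  have hqint : IntegrableOn (fun t : ℝ => (t - (a+1))^2 * (t ^ a * Real.exp (-t)) / r^2)
      (Ioi 0) := by
    have h1 : IntegrableOn (fun t : ℝ => (t - (a+1))^2 * (t ^ a * Real.exp (-t))) (Ioi 0) := by
      have hcomb : IntegrableOn (fun t : ℝ => t ^ (a+2) * Real.exp (-t)
          - (2*(a+1)) * (t ^ (a+1) * Real.exp (-t)) + (a+1)^2 * (t ^ a * Real.exp (-t)))
          (Ioi 0) :=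
        ((intOn_rpow_exp (by linarith : (0:ℝ) < a+2)).sub
          ((intOn_rpow_exp (by linarith : (0:ℝ) < a+1)).const_mul _)).add
          ((intOn_rpow_exp ha).const_mul _)
      refine hcomb.congr_fun (fun t ht => ?_) measurableSet_Ioi
      have ht' : (0:ℝ) < t := ht
      have e1 : t ^ (a+1) = t ^ a * t := Real.rpow_add_one ht'.ne' a
      have e2 : t ^ (a+2) = t ^ a * t^2 := by
        rw [show a+2 = a+1+1 by ring, Real.rpow_add_one ht'.ne', e1]; ring
      beta_reduce; rw [e1, e2]; ring
    exact h1.div_const _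
  have hgnn : ∀ t ∈ Ioi (0:ℝ), 0 ≤ t ^ a * Real.exp (-t) := by
    intro t ht
    have ht' : (0:ℝ) < t := ht
    exact mul_nonneg (Real.rpow_nonneg ht'.le a) (Real.exp_pos _).le
  have hdiff : ∫ t in Ioi (0:ℝ) \ Icc (a+1-r) (a+1+r), t ^ a * Real.exp (-t)
      = (∫ t in Ioi (0:ℝ), t ^ a * Real.exp (-t))
        - ∫ t in Icc (a+1-r) (a+1+r), t ^ a * Real.exp (-t) :=
    integral_diff measurableSet_Icc hgint hWsub
  have step1 : ∫ t in Ioi (0:ℝ) \ Icc (a+1-r) (a+1+r), t ^ a * Real.exp (-t)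
      ≤ ∫ t in Ioi (0:ℝ) \ Icc (a+1-r) (a+1+r),
          (t - (a+1))^2 * (t ^ a * Real.exp (-t)) / r^2 := by
    refine setIntegral_mono_on (hgint.mono_set diff_subset)
      (hqint.mono_set diff_subset) (measurableSet_Ioi.diff measurableSet_Icc) ?_
    intro t ht
    obtain ⟨ht0, htW⟩ := ht
    have ht' : (0:ℝ) < t := ht0
    have hsq : r^2 ≤ (t - (a+1))^2 := by
      rw [Set.mem_Icc, not_and_or, not_le, not_le] at htW
      rcases htW with h | h <;> nlinarith
    have h1 : 1 ≤ (t - (a+1))^2 / r^2 := (one_le_div (by positivity)).2 hsq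
    calc t ^ a * Real.exp (-t) = 1 * (t ^ a * Real.exp (-t)) := (one_mul _).symm
      _ ≤ ((t - (a+1))^2 / r^2) * (t ^ a * Real.exp (-t)) :=
          mul_le_mul_of_nonneg_right h1 (hgnn t ht0)
      _ = (t - (a+1))^2 * (t ^ a * Real.exp (-t)) / r^2 := by ring
  have step2 : ∫ t in Ioi (0:ℝ) \ Icc (a+1-r) (a+1+r),
        (t - (a+1))^2 * (t ^ a * Real.exp (-t)) / r^2
      ≤ ∫ t in Ioi (0:ℝ), (t - (a+1))^2 * (t ^ a * Real.exp (-t)) / r^2 := by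
    refine setIntegral_mono_set hqint ?_ (HasSubset.Subset.eventuallyLE diff_subset)
    filter_upwards [ae_restrict_mem measurableSet_Ioi] with t ht
    have ht' : (0:ℝ) < t := ht
    have := hgnn t ht
    positivity
  have hval : ∫ t in Ioi (0:ℝ), (t - (a+1))^2 * (t ^ a * Real.exp (-t)) / r^2
      = (a+1) * Real.Gamma (a+1) / r^2 := by
    rw [integral_div, integral_moment ha]
  have hG : ∫ t in Ioi (0:ℝ), t ^ a * Real.exp (-t) = Real.Gamma (a+1) :=
    integral_rpow_exp ha
  linarith


lemma pt_lower {a t : ℝ} (ht : 0 < t) :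
    2*(t ^ a * Real.exp (-t)) ≤ t ^ a / Real.sinh t := by
  have hs : 0 < Real.sinh t := Real.sinh_pos_iff.2 ht
  have hta : (0:ℝ) ≤ t ^ a := Real.rpow_nonneg ht.le a
  rw [le_div_iff₀ hs, Real.sinh_eq]
  have h1 : Real.exp (-t) * Real.exp t = 1 := by rw [← Real.exp_add]; simp
  nlinarith [mul_nonneg hta (mul_nonneg (Real.exp_pos (-t)).le (Real.exp_pos (-t)).le)]

lemma Cconst_lower {a : ℝ} (ha : 1 < a) : 2 * Real.Gamma (a+1) ≤ Cconst a := by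
  have h := setIntegral_mono_on
    ((intOn_rpow_exp (by linarith : (0:ℝ) < a)).const_mul 2) (intOn_sinh ha)
    measurableSet_Ioi (fun t ht => pt_lower (show (0:ℝ) < t from ht))
  rwa [integral_const_mul, integral_rpow_exp (by linarith : (0:ℝ) < a)] at h

lemma Cconst_pos {a : ℝ} (ha : 1 < a) : 0 < Cconst a := by
  have := Cconst_lower ha
  have hg : 0 < Real.Gamma (a+1) := Real.Gamma_pos_of_pos (by linarith)
  linarith

lemma exp_identities {t : ℝ} :
    2 * Real.exp (-t) * Real.sinh t = 1 - Real.exp (-(2*t)) := by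
  have h1 : Real.exp (-t) * Real.exp t = 1 := by rw [← Real.exp_add]; simp
  have h2 : Real.exp (-t) * Real.exp (-t) = Real.exp (-(2*t)) := by
    rw [← Real.exp_add]; ring_nf
  rw [Real.sinh_eq]
  linear_combination h1 - h2

lemma Cconst_upper {a : ℝ} (ha : 2 < a) :
    Cconst a ≤ 2 * Real.Gamma (a+1)
      + 3*((1/3)^a * Real.Gamma a + (1/3)^(a+1) * Real.Gamma (a+1)) := by
  have ha0 : (0:ℝ) < a := by linarith
  have ha1 : (1:ℝ) < a := by linarith
  have hsub : Cconst a - 2*Real.Gamma (a+1)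
      = ∫ t in Ioi (0:ℝ), (t ^ a / Real.sinh t - 2*(t ^ a * Real.exp (-t))) := by
    rw [integral_sub (intOn_sinh ha1) ((intOn_rpow_exp ha0).const_mul 2),
      integral_const_mul, integral_rpow_exp ha0, Cconst]
  have hle : (∫ t in Ioi (0:ℝ), (t ^ a / Real.sinh t - 2*(t ^ a * Real.exp (-t))))
      ≤ ∫ t in Ioi (0:ℝ), 3*(t ^ (a-1) * Real.exp (-(3*t)) + t ^ a * Real.exp (-(3*t))) := by
    have hRint : IntegrableOn
        (fun t : ℝ => 3*(t ^ (a-1) * Real.exp (-(3*t)) + t ^ a * Real.exp (-(3*t))))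
        (Ioi (0:ℝ)) :=
      ((intOn_rpow_exp3 (by linarith : (0:ℝ) < a-1)).add (intOn_rpow_exp3 ha0)).const_mul 3
    refine integral_mono_of_nonneg ?_ hRint ?_
    · filter_upwards [ae_restrict_mem measurableSet_Ioi] with t ht
      have ht' : (0:ℝ) < t := ht
      have := pt_lower (a := a) ht'
      simp only [Pi.zero_apply]; linarith
    · filter_upwards [ae_restrict_mem measurableSet_Ioi] with t ht
      have ht' : (0:ℝ) < t := ht
      have hs : 0 < Real.sinh t := Real.sinh_pos_iff.2 ht'
      have hkey : t ^ a / Real.sinh t - 2*(t ^ a * Real.exp (-t))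
          = Real.exp (-(2*t)) * (t ^ a / Real.sinh t) := by
        have h := exp_identities (t := t)
        field_simp
        linear_combination (-1:ℝ) * h
      rw [hkey]
      have hb := sinh_bound (le_of_lt (by linarith : 1 < a)) ht'
      have h3 : Real.exp (-(2*t)) * (t ^ a / Real.sinh t)
          ≤ Real.exp (-(2*t)) * (3 * (t ^ (a-1) * Real.exp (-t) + t ^ a * Real.exp (-t))) :=
        mul_le_mul_of_nonneg_left hb (Real.exp_pos _).le
      refine h3.trans (le_of_eq ?_)
      have he : Real.exp (-(2*t)) * Real.exp (-t) = Real.exp (-(3*t)) := by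
        rw [← Real.exp_add]; ring_nf
      calc Real.exp (-(2*t)) * (3 * (t ^ (a-1) * Real.exp (-t) + t ^ a * Real.exp (-t)))
          = 3*(t ^ (a-1) * (Real.exp (-(2*t)) * Real.exp (-t))
            + t ^ a * (Real.exp (-(2*t)) * Real.exp (-t))) := by ring
        _ = _ := by rw [he]
  have hval : (∫ t in Ioi (0:ℝ),
        3*(t ^ (a-1) * Real.exp (-(3*t)) + t ^ a * Real.exp (-(3*t))))
      = 3*((1/3)^a * Real.Gamma a + (1/3)^(a+1) * Real.Gamma (a+1)) := by
    rw [integral_const_mul,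
      integral_add (intOn_rpow_exp3 (by linarith : (0:ℝ) < a-1)) (intOn_rpow_exp3 ha0),
      integral_rpow_exp3 (by linarith : (0:ℝ) < a-1), integral_rpow_exp3 ha0,
      sub_add_cancel]
  linarith

lemma Hfun_meas (α x : ℝ) :
    AEStronglyMeasurable
      (fun t : ℝ => t ^ α / Real.sinh t * (x * Real.sin x / (x ^ 2 + t ^ 2)))
      (volume.restrict (Ioi (0:ℝ))) := by
  apply Measurable.aestronglyMeasurable
  fun_prop

lemma Hfun_point_bound {α x t : ℝ} (ht : 0 < t) (hx : 0 ≤ x) :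
    |t ^ α / Real.sinh t * (x * Real.sin x / (x ^ 2 + t ^ 2))|
      ≤ t ^ (α-1) / Real.sinh t / 2 := by
  have hs : 0 < Real.sinh t := Real.sinh_pos_iff.2 ht
  have hta : (0:ℝ) ≤ t ^ α := Real.rpow_nonneg ht.le α
  have hden : (0:ℝ) < x^2 + t^2 := by positivity
  have hA : (0:ℝ) ≤ t ^ α / Real.sinh t := div_nonneg hta hs.le
  have h1 : |x * Real.sin x / (x ^ 2 + t ^ 2)| ≤ 1/(2*t) := by
    rw [abs_div, abs_of_pos hden, abs_mul, abs_of_nonneg hx]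
    have hsin : |Real.sin x| ≤ 1 := Real.abs_sin_le_one x
    have hnum : x * |Real.sin x| ≤ x := by nlinarith
    have h2 : x * |Real.sin x| / (x^2+t^2) ≤ x / (x^2+t^2) :=
      (div_le_div_iff_of_pos_right hden).2 hnum
    have h3 : x / (x^2+t^2) ≤ 1/(2*t) := by
      rw [div_le_div_iff₀ hden (by linarith)]
      nlinarith [sq_nonneg (x - t)]
    linarith
  have h4 : |t ^ α / Real.sinh t * (x * Real.sin x / (x ^ 2 + t ^ 2))|
      ≤ (t ^ α / Real.sinh t) * (1/(2*t)) := by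
    rw [abs_mul, abs_of_nonneg hA]
    exact mul_le_mul_of_nonneg_left h1 hA
  refine h4.trans (le_of_eq ?_)
  have e1 : t ^ (α-1) = t ^ α / t := by
    rw [Real.rpow_sub ht, Real.rpow_one]
  rw [e1]
  ring

lemma Hfun_intOn {α : ℝ} (hα : 2 < α) {x : ℝ} (hx : 0 ≤ x) :
    IntegrableOn
      (fun t : ℝ => t ^ α / Real.sinh t * (x * Real.sin x / (x ^ 2 + t ^ 2)))
      (Ioi (0:ℝ)) := by
  refine ((intOn_sinh (by linarith : (1:ℝ) < α - 1)).div_const 2).mono'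
    (Hfun_meas α x) ?_
  filter_upwards [ae_restrict_mem measurableSet_Ioi] with t ht
  have ht' : (0:ℝ) < t := ht
  rw [Real.norm_eq_abs]
  exact Hfun_point_bound ht' hx

lemma abs_Hfun_le {α : ℝ} (hα : 2 < α) {x : ℝ} (hx : 0 ≤ x) :
    |Hfun α x| ≤ Cconst (α-1) / 2 := by
  have hbd : ‖∫ t in Ioi (0:ℝ), t ^ α / Real.sinh t * (x * Real.sin x / (x ^ 2 + t ^ 2))‖
      ≤ ∫ t in Ioi (0:ℝ), t ^ (α-1) / Real.sinh t / 2 := by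
    refine norm_integral_le_of_norm_le
      ((intOn_sinh (by linarith : (1:ℝ) < α - 1)).div_const 2) ?_
    filter_upwards [ae_restrict_mem measurableSet_Ioi] with t ht
    have ht' : (0:ℝ) < t := ht
    rw [Real.norm_eq_abs]
    exact Hfun_point_bound ht' hx
  rw [Real.norm_eq_abs] at hbd
  rwa [integral_div, ← Cconst] at hbd

lemma exists_good_x {α : ℝ} (hα : 0 ≤ α) :
    ∃ x : ℝ, α ≤ x ∧ x ≤ α + 3*π ∧ Real.sin x = 1 := by
  have hπ := Real.pi_pos
  have hp : (0:ℝ) < 2*π := by positivity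
  set c : ℝ := (α - π/2)/(2*π) with hc
  have hcc : c*(2*π) = α - π/2 := div_mul_cancel₀ _ (ne_of_gt hp)
  have h1 : c ≤ (⌈c⌉ : ℝ) := Int.le_ceil _
  have h2 : ((⌈c⌉ : ℤ) : ℝ) < c + 1 := Int.ceil_lt_add_one _
  refine ⟨π/2 + (⌈c⌉ : ℤ) * (2*π), ?_, ?_, ?_⟩
  · nlinarith
  · nlinarith
  · rw [Real.sin_add_int_mul_two_pi, Real.sin_pi_div_two]

lemma Hfun_lower {α x r : ℝ} (hα : 2 < α) (hr : 0 < r) (hrle : r + 1 ≤ α)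
    (hx1 : α ≤ x) (hx3 : x ≤ α + 3*π) (hsin : Real.sin x = 1) :
    α / ((α+3*π)^2 + (α+1+r)^2) * (2*(Real.Gamma (α+1) - (α+1)*Real.Gamma (α+1)/r^2))
      ≤ Hfun α x := by
  have hπ := Real.pi_pos
  have hx0 : 0 < x := lt_of_lt_of_le (by linarith) hx1
  have hqpos : 0 < α / ((α+3*π)^2 + (α+1+r)^2) := by
    apply div_pos (by linarith)
    nlinarith
  have hf_nonneg : ∀ t ∈ Ioi (0:ℝ),
      0 ≤ t ^ α / Real.sinh t * (x * Real.sin x / (x^2+t^2)) := by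
    intro t ht
    have ht' : (0:ℝ) < t := ht
    have hs : 0 < Real.sinh t := Real.sinh_pos_iff.2 ht'
    rw [hsin]
    have : (0:ℝ) < x^2 + t^2 := by positivity
    have hta : (0:ℝ) ≤ t ^ α := Real.rpow_nonneg ht'.le α
    positivity
  have hfint := Hfun_intOn hα hx0.le (x := x)
  have hWsub : Icc (α+1-r) (α+1+r) ⊆ Ioi (0:ℝ) := by
    intro t htW
    have h1 := htW.1
    show (0:ℝ) < t
    linarith
  have hA : (∫ t in Icc (α+1-r) (α+1+r),
        t ^ α / Real.sinh t * (x * Real.sin x / (x^2+t^2)))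
      ≤ Hfun α x := by
    rw [Hfun]
    refine setIntegral_mono_set hfint ?_ (HasSubset.Subset.eventuallyLE hWsub)
    filter_upwards [ae_restrict_mem measurableSet_Ioi] with t ht
    exact hf_nonneg t ht
  have hB : (∫ t in Icc (α+1-r) (α+1+r),
        (α / ((α+3*π)^2 + (α+1+r)^2)) * (2*(t ^ α * Real.exp (-t))))
      ≤ ∫ t in Icc (α+1-r) (α+1+r),
          t ^ α / Real.sinh t * (x * Real.sin x / (x^2+t^2)) := by
    have h1 : IntegrableOn
        (fun t : ℝ => (α / ((α+3*π)^2 + (α+1+r)^2)) * (2*(t ^ α * Real.exp (-t))))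
        (Ioi (0:ℝ)) :=
      ((intOn_rpow_exp (by linarith : (0:ℝ) < α)).const_mul 2).const_mul _
    refine setIntegral_mono_on (h1.mono_set hWsub)
      (hfint.mono_set hWsub) measurableSet_Icc ?_
    intro t htW
    have ht' : (0:ℝ) < t := hWsub htW
    have hs : 0 < Real.sinh t := Real.sinh_pos_iff.2 ht'
    have hta : (0:ℝ) ≤ t ^ α := Real.rpow_nonneg ht'.le α
    have hden : (0:ℝ) < x^2 + t^2 := by positivity
    have hq2 : α / ((α+3*π)^2 + (α+1+r)^2) ≤ x / (x^2+t^2) := by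
      apply div_le_div₀ hx0.le hx1 hden
      have ht2 : t ≤ α+1+r := htW.2
      nlinarith
    have hpt := pt_lower (a := α) ht'
    have h2t : (0:ℝ) ≤ 2*(t ^ α * Real.exp (-t)) := by positivity
    calc (α / ((α+3*π)^2 + (α+1+r)^2)) * (2*(t ^ α * Real.exp (-t)))
        ≤ (x / (x^2+t^2)) * (t ^ α / Real.sinh t) :=
          mul_le_mul hq2 hpt h2t (by positivity)
      _ = t ^ α / Real.sinh t * (x * Real.sin x / (x^2+t^2)) := by
          rw [hsin]; ring
  have hC : (α / ((α+3*π)^2 + (α+1+r)^2))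
        * (2*(Real.Gamma (α+1) - (α+1)*Real.Gamma (α+1)/r^2))
      ≤ ∫ t in Icc (α+1-r) (α+1+r),
          (α / ((α+3*π)^2 + (α+1+r)^2)) * (2*(t ^ α * Real.exp (-t))) := by
    have hwin := window_integral_ge (by linarith : (0:ℝ) < α) hr
      (by linarith : (0:ℝ) < α + 1 - r)
    calc (α / ((α+3*π)^2 + (α+1+r)^2))
          * (2*(Real.Gamma (α+1) - (α+1)*Real.Gamma (α+1)/r^2))
        ≤ (α / ((α+3*π)^2 + (α+1+r)^2))
          * (2*(∫ t in Icc (α+1-r) (α+1+r), t ^ α * Real.exp (-t))) := by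
          apply mul_le_mul_of_nonneg_left _ hqpos.le
          linarith
      _ = _ := by
          rw [integral_const_mul, integral_const_mul]
  linarith


noncomputable def RR (a : ℝ) : ℝ := Real.sqrt (a * Real.sqrt a)

lemma sqrt_atTop : Tendsto Real.sqrt atTop atTop := by
  apply tendsto_atTop_atTop_of_monotone (fun a b h => Real.sqrt_le_sqrt h)
  intro b
  exact ⟨(max b 0)^2, by
    rw [Real.sqrt_sq (le_max_right _ _)]; exact le_max_left _ _⟩

lemma one_div_sqrt_tendsto : Tendsto (fun a : ℝ => 1 / Real.sqrt a) atTop (nhds 0) :=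
  tendsto_const_nhds.div_atTop sqrt_atTop

lemma log_three_ge_one : (1:ℝ) ≤ Real.log 3 := by
  rw [Real.le_log_iff_exp_le (by norm_num : (0:ℝ) < 3)]
  have := Real.exp_one_lt_d9
  linarith

lemma rpow_three_ge {y : ℝ} (hy : 0 ≤ y) : y ≤ (3:ℝ) ^ y := by
  rw [Real.rpow_def_of_pos (by norm_num : (0:ℝ) < 3)]
  have h1 : y * 1 ≤ Real.log 3 * y := by
    nlinarith [log_three_ge_one]
  calc y = y * 1 := (mul_one y).symm
    _ ≤ Real.log 3 * y := h1
    _ ≤ Real.exp (Real.log 3 * y) := by linarith [Real.add_one_le_exp (Real.log 3 * y)]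

lemma hK : Tendsto (fun a : ℝ => Cconst a / (2*Real.Gamma (a+1))) atTop (nhds 1) := by
  have hUb : ∀ᶠ a : ℝ in atTop, Cconst a / (2*Real.Gamma (a+1)) ≤ 1 + 3/a := by
    filter_upwards [eventually_ge_atTop (3:ℝ)] with a ha
    have ha0 : (0:ℝ) < a := by linarith
    have hG : 0 < Real.Gamma (a+1) := Real.Gamma_pos_of_pos (by linarith)
    have hGa : 0 < Real.Gamma a := Real.Gamma_pos_of_pos ha0
    have hrec : Real.Gamma (a+1) = a * Real.Gamma a := Real.Gamma_add_one ha0.ne'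
    have h13 : ((1:ℝ)/3) ^ a ≤ 1 :=
      Real.rpow_le_one (by norm_num) (by norm_num) ha0.le
    have h13' : ((1:ℝ)/3) ^ (a+1) ≤ 1/a := by
      have h3 : a ≤ (3:ℝ) ^ (a+1) := le_trans (by linarith) (rpow_three_ge (by linarith))
      rw [Real.div_rpow (by norm_num) (by norm_num), Real.one_rpow]
      exact one_div_le_one_div_of_le ha0 h3
    have hE : 3*((1/3)^a * Real.Gamma a + (1/3)^(a+1) * Real.Gamma (a+1))
        ≤ 6 * Real.Gamma (a+1) / a := by
      have e1 : ((1:ℝ)/3)^a * Real.Gamma a ≤ Real.Gamma (a+1) / a := by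
        rw [hrec, mul_comm a (Real.Gamma a), mul_div_assoc, div_self ha0.ne', mul_one]
        nlinarith [Real.rpow_pos_of_pos (show (0:ℝ) < 1/3 by norm_num) a]
      have e2 : ((1:ℝ)/3)^(a+1) * Real.Gamma (a+1) ≤ Real.Gamma (a+1) / a := by
        calc ((1:ℝ)/3)^(a+1) * Real.Gamma (a+1)
            ≤ (1/a) * Real.Gamma (a+1) := mul_le_mul_of_nonneg_right h13' hG.le
          _ = Real.Gamma (a+1) / a := by rw [mul_comm, mul_one_div]
      calc 3*((1/3)^a * Real.Gamma a + (1/3)^(a+1) * Real.Gamma (a+1))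
          ≤ 3*(Real.Gamma (a+1)/a + Real.Gamma (a+1)/a) := by linarith
        _ = 6 * Real.Gamma (a+1) / a := by ring
    have hub : Cconst a ≤ 2 * Real.Gamma (a+1) + 6 * Real.Gamma (a+1) / a := by
      have := Cconst_upper (show (2:ℝ) < a by linarith)
      linarith
    rw [div_le_iff₀ (by positivity : (0:ℝ) < 2*Real.Gamma (a+1))]
    calc Cconst a ≤ 2 * Real.Gamma (a+1) + 6 * Real.Gamma (a+1) / a := hub
      _ = (1 + 3/a) * (2*Real.Gamma (a+1)) := by field_simp; ring
  have hLb : ∀ᶠ a : ℝ in atTop, (1:ℝ) ≤ Cconst a / (2*Real.Gamma (a+1)) := by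
    filter_upwards [eventually_ge_atTop (3:ℝ)] with a ha
    have hG : 0 < Real.Gamma (a+1) := Real.Gamma_pos_of_pos (by linarith)
    rw [le_div_iff₀ (by positivity : (0:ℝ) < 2*Real.Gamma (a+1)), one_mul]
    exact Cconst_lower (by linarith)
  have hub_t : Tendsto (fun a : ℝ => 1 + 3/a) atTop (nhds 1) := by
    have h0 : Tendsto (fun a : ℝ => 3/a) atTop (nhds 0) :=
      tendsto_const_nhds.div_atTop tendsto_id
    have h1 := (tendsto_const_nhds (x := (1:ℝ)) (f := atTop (α := ℝ))).add h0
    simpa using h1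
  exact tendsto_of_tendsto_of_tendsto_of_le_of_le' tendsto_const_nhds hub_t hLb hUb

lemma hKshift : Tendsto (fun a : ℝ => Cconst (a-1) / (2*Real.Gamma (a-1+1))) atTop (nhds 1) := by
  have hcomp : Tendsto (fun a : ℝ => a - 1) atTop atTop :=
    tendsto_atTop_add_const_right atTop (-1) tendsto_id
  exact hK.comp hcomp

lemma hUpLim : Tendsto
    (fun a : ℝ => (Cconst (a-1)/2) * (1+2*a) / Cconst a) atTop (nhds 1) := by
  have h2 : Tendsto (fun a : ℝ => (1+2*a)/(2*a)) atTop (nhds 1) := by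
    have h0 : Tendsto (fun a : ℝ => 1/(2*a) + 1) atTop (nhds (0+1)) := by
      refine Tendsto.add ?_ tendsto_const_nhds
      exact tendsto_const_nhds.div_atTop (tendsto_id.const_mul_atTop (by norm_num))
    rw [zero_add] at h0
    refine h0.congr' ?_
    filter_upwards [eventually_gt_atTop (0:ℝ)] with a ha
    field_simp
  have hmain : Tendsto (fun a : ℝ =>
      (Cconst (a-1) / (2*Real.Gamma (a-1+1))) / (Cconst a / (2*Real.Gamma (a+1)))
        * ((1+2*a)/(2*a))) atTop (nhds 1) := by
    have h3 := (hKshift.div hK one_ne_zero).mul h2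
    simpa using h3
  refine hmain.congr' ?_
  filter_upwards [eventually_ge_atTop (3:ℝ)] with a ha
  have ha0 : (0:ℝ) < a := by linarith
  have hG : 0 < Real.Gamma (a+1) := Real.Gamma_pos_of_pos (by linarith)
  have hGa : 0 < Real.Gamma a := Real.Gamma_pos_of_pos ha0
  have hC : 0 < Cconst a := Cconst_pos (by linarith)
  have hrec : Real.Gamma (a+1) = a * Real.Gamma a := Real.Gamma_add_one ha0.ne'
  have hsh : a - 1 + 1 = a := by ring
  rw [hsh, hrec]
  field_simp

lemma RR_pos {a : ℝ} (ha : 0 < a) : 0 < RR a := by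
  rw [RR]
  have h1 : 0 < Real.sqrt a := Real.sqrt_pos.2 ha
  exact Real.sqrt_pos.2 (by positivity)

lemma RR_sq {a : ℝ} (ha : 0 ≤ a) : (RR a)^2 = a * Real.sqrt a := by
  rw [RR, Real.sq_sqrt (by positivity)]

lemma RR_div_tendsto : Tendsto (fun a : ℝ => RR a / a) atTop (nhds 0) := by
  have hsub : Tendsto (fun a : ℝ => 1 / Real.sqrt a) atTop (nhds 0) := one_div_sqrt_tendsto
  have hcont : Tendsto (fun y : ℝ => Real.sqrt y) (nhds 0) (nhds 0) := by
    have := Real.continuous_sqrt.tendsto 0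
    rwa [Real.sqrt_zero] at this
  have hcomp : Tendsto (fun a : ℝ => Real.sqrt (1 / Real.sqrt a)) atTop (nhds 0) :=
    hcont.comp hsub
  refine hcomp.congr' ?_
  filter_upwards [eventually_ge_atTop (1:ℝ)] with a ha
  have ha0 : (0:ℝ) < a := by linarith
  have hs0 : (0:ℝ) < Real.sqrt a := Real.sqrt_pos.2 ha0
  have hss : Real.sqrt a * Real.sqrt a = a := Real.mul_self_sqrt ha0.le
  have key : (RR a / a)^2 = 1 / Real.sqrt a := by
    rw [div_pow, RR_sq ha0.le, div_eq_div_iff (by positivity) hs0.ne']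
    linear_combination a * hss
  rw [← key, Real.sqrt_sq (div_nonneg (by rw [RR]; exact Real.sqrt_nonneg _) ha0.le)]

lemma RR_le {a : ℝ} (ha : 100 ≤ a) : RR a + 1 ≤ a := by
  have ha0 : (0:ℝ) < a := by linarith
  have hsa : Real.sqrt a ≤ a/2 := by
    rw [show a/2 = Real.sqrt ((a/2)^2) from (Real.sqrt_sq (by linarith)).symm]
    exact Real.sqrt_le_sqrt (by nlinarith)
  have h1 : RR a ≤ a - 1 := by
    rw [RR, show a - 1 = Real.sqrt ((a-1)^2) from (Real.sqrt_sq (by linarith)).symm]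
    apply Real.sqrt_le_sqrt
    nlinarith
  linarith

lemma hLoLim : Tendsto (fun a : ℝ =>
    a/((a+3*π)^2+(a+1+RR a)^2)
      * (2*(Real.Gamma (a+1) - (a+1)*Real.Gamma (a+1)/(RR a)^2)) * (1+2*a) / Cconst a)
    atTop (nhds 1) := by
  have t2 : Tendsto (fun a : ℝ => 1/a) atTop (nhds 0) :=
    tendsto_const_nhds.div_atTop tendsto_id
  -- G1
  have hG1 : Tendsto (fun a : ℝ => a*(1+2*a)/((a+3*π)^2+(a+1+RR a)^2)) atTop (nhds 1) := by
    have t1 : Tendsto (fun a : ℝ => 3*π/a) atTop (nhds 0) :=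
      tendsto_const_nhds.div_atTop tendsto_id
    have hnum : Tendsto (fun a : ℝ => 2+1/a) atTop (nhds 2) := by
      have h := (tendsto_const_nhds : Tendsto (fun _ : ℝ => (2:ℝ)) atTop (nhds 2)).add t2
      rwa [add_zero] at h
    have hden : Tendsto (fun a : ℝ => (1+3*π/a)^2+(1+1/a+RR a/a)^2) atTop (nhds 2) := by
      have d1 : Tendsto (fun a : ℝ => (1+3*π/a)^2) atTop (nhds 1) := by
        have h := ((tendsto_const_nhds :
          Tendsto (fun _ : ℝ => (1:ℝ)) atTop (nhds 1)).add t1).pow 2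
        rwa [show ((1:ℝ)+0)^2 = 1 by norm_num] at h
      have d2 : Tendsto (fun a : ℝ => (1+1/a+RR a/a)^2) atTop (nhds 1) := by
        have h := (((tendsto_const_nhds :
          Tendsto (fun _ : ℝ => (1:ℝ)) atTop (nhds 1)).add t2).add RR_div_tendsto).pow 2
        rwa [show ((1:ℝ)+0+0)^2 = 1 by norm_num] at h
      have h := d1.add d2
      rwa [show (1:ℝ)+1 = 2 by norm_num] at h
    have hF1 : Tendsto (fun a : ℝ => (2+1/a)/((1+3*π/a)^2+(1+1/a+RR a/a)^2))
        atTop (nhds 1) := by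
      have h := hnum.div hden (by norm_num : (2:ℝ) ≠ 0)
      rwa [show (2:ℝ)/2 = 1 by norm_num] at h
    refine hF1.congr' ?_
    filter_upwards [eventually_ge_atTop (1:ℝ)] with a ha
    have ha0 : (0:ℝ) < a := by linarith
    have hπ := Real.pi_pos
    have hRnn : 0 ≤ RR a := le_of_lt (RR_pos ha0)
    have hD : (0:ℝ) < (a+3*π)^2+(a+1+RR a)^2 := by nlinarith
    have hD' : (0:ℝ) < (1+3*π/a)^2+(1+1/a+RR a/a)^2 := by
      have h1 : (0:ℝ) < 1+3*π/a := by positivity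
      nlinarith
    field_simp
    ring
  -- G2
  have hG2 : Tendsto (fun a : ℝ => 1 - (a+1)/(RR a)^2) atTop (nhds 1) := by
    have hh : Tendsto (fun a : ℝ => (a+1)/(RR a)^2) atTop (nhds 0) := by
      have hsum : Tendsto (fun a : ℝ => 1/Real.sqrt a + 1/(a*Real.sqrt a))
          atTop (nhds 0) := by
        have u1 : Tendsto (fun a : ℝ => 1/(a*Real.sqrt a)) atTop (nhds 0) :=
          tendsto_const_nhds.div_atTop (tendsto_id.atTop_mul_atTop₀ sqrt_atTop)
        have h := one_div_sqrt_tendsto.add u1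
        rwa [add_zero] at h
      refine hsum.congr' ?_
      filter_upwards [eventually_ge_atTop (1:ℝ)] with a ha
      have ha0 : (0:ℝ) < a := by linarith
      have hs0 : (0:ℝ) < Real.sqrt a := Real.sqrt_pos.2 ha0
      rw [RR_sq ha0.le]
      field_simp
    have h := (tendsto_const_nhds :
      Tendsto (fun _ : ℝ => (1:ℝ)) atTop (nhds 1)).sub hh
    rwa [sub_zero] at h
  -- G3
  have hG3 : Tendsto (fun a : ℝ => 2*Real.Gamma (a+1)/Cconst a) atTop (nhds 1) := by
    have hinv := hK.inv₀ one_ne_zero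
    rw [inv_one] at hinv
    refine hinv.congr (fun a => ?_)
    rw [inv_div]
  have hprod := (hG1.mul hG2).mul hG3
  rw [show (1:ℝ)*1*1 = 1 by norm_num] at hprod
  refine hprod.congr (fun a => ?_)
  ring

theorem stmt_6 :
    Tendsto
      (fun α : ℝ => (⨆ x : Set.Ici (0:ℝ), |Hfun α (x : ℝ)|) * (1 + 2 * α) / Cconst α)
      atTop (nhds 1) := by
  haveI : Nonempty (Set.Ici (0:ℝ)) := ⟨⟨0, Set.self_mem_Ici⟩⟩
  refine tendsto_of_tendsto_of_tendsto_of_le_of_le' hLoLim hUpLim ?_ ?_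
  · filter_upwards [eventually_ge_atTop (100:ℝ)] with α hα
    have hα2 : (2:ℝ) < α := by linarith
    have hC : 0 < Cconst α := Cconst_pos (by linarith)
    have hr : 0 < RR α := RR_pos (by linarith)
    have hrle : RR α + 1 ≤ α := RR_le hα
    obtain ⟨x, hx1, hx3, hsin⟩ := exists_good_x (by linarith : (0:ℝ) ≤ α)
    have hxmem : (0:ℝ) ≤ x := by linarith
    have hbdd : BddAbove (Set.range fun x : Set.Ici (0:ℝ) => |Hfun α (x:ℝ)|) := by
      refine ⟨Cconst (α-1)/2, ?_⟩
      rintro y ⟨x', rfl⟩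
      exact abs_Hfun_le hα2 x'.2
    have hsup : Hfun α x ≤ ⨆ x : Set.Ici (0:ℝ), |Hfun α (x:ℝ)| :=
      le_trans (le_abs_self _) (le_ciSup hbdd ⟨x, Set.mem_Ici.2 hxmem⟩)
    have hlow := Hfun_lower hα2 hr hrle hx1 hx3 hsin
    have hmul : α/((α+3*π)^2+(α+1+RR α)^2)
          * (2*(Real.Gamma (α+1) - (α+1)*Real.Gamma (α+1)/(RR α)^2)) * (1+2*α)
        ≤ (⨆ x : Set.Ici (0:ℝ), |Hfun α (x:ℝ)|) * (1+2*α) :=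
      mul_le_mul_of_nonneg_right (le_trans hlow hsup) (by linarith)
    exact (div_le_div_iff_of_pos_right hC).2 hmul
  · filter_upwards [eventually_ge_atTop (3:ℝ)] with α hα
    have hα2 : (2:ℝ) < α := by linarith
    have hC : 0 < Cconst α := Cconst_pos (by linarith)
    have hS : (⨆ x : Set.Ici (0:ℝ), |Hfun α (x:ℝ)|) ≤ Cconst (α-1)/2 :=
      ciSup_le (fun x => abs_Hfun_le hα2 x.2)
    have hmul := mul_le_mul_of_nonneg_right hS (by linarith : (0:ℝ) ≤ 1+2*α)
    exact (div_le_div_iff_of_pos_right hC).2 hmul
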